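/- Let Γ = ⟨S | R⟩ be a finitely presented sofic group with a generator τ ∈ S that is a central nontrivial involution in Γ. Then Γ has a sofic approximation ψ_n : S → Sym((Ω_n)±) such that ψ_n(τ) = −Id (the sign flip on (Ω_n)± = {±}×Ω_n) for all n, and every permutation in the image of ψ_n commutes with the sign flip. -/

import Mathlib

set_option linter.unusedSectionVars false
set_option maxHeartbeats 1000000

open scoped commutatorElement

/-- Plain normalized Hamming distance on `Sym(γ)` for a finite type `γ`. -/
noncomputable def dHp {γ : Type*} [Fintype γ] [DecidableEq γ] (a b : Equiv.Perm γ) : ℝ :=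
  ((Finset.univ.filter fun x : γ => a x ≠ b x).card : ℝ) / Fintype.card γ

/-- The sign flip `-Id` on `Ω± = {+,−} × Ω` (signs modeled by `Bool`). -/
def negId (Ω : Type*) : Equiv.Perm (Bool × Ω) :=
  Function.Involutive.toPerm (fun p => (!p.1, p.2)) (fun p => by simp)

/-- A sofic approximation of the finitely presented group `⟨S | R⟩`: a sequence of
almost actions whose defects tend to `0` and which separate every word not in the
normal closure of `R` from the identity (distance tending to `1`). -/
def IsSoficApprox {S : Type*} [DecidableEq S] (R : Finset (FreeGroup S))
    {Ω : ℕ → Type} [∀ n, Fintype (Ω n)] [∀ n, DecidableEq (Ω n)]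
    (φ : ∀ n, S → Equiv.Perm (Ω n)) : Prop :=
  (∀ r ∈ R, Filter.Tendsto (fun n => dHp (FreeGroup.lift (φ n) r) 1)
      Filter.atTop (nhds 0)) ∧
  ∀ w : FreeGroup S, w ∉ Subgroup.normalClosure (R : Set (FreeGroup S)) →
    Filter.Tendsto (fun n => dHp (FreeGroup.lift (φ n) w) 1) Filter.atTop (nhds 1)


namespace Stmt12Aux

open Finset Filter Equiv

variable {γ : Type*} [Fintype γ] [DecidableEq γ]

/-- normalized fraction of a finset -/
noncomputable def fr (s : Finset γ) : ℝ := s.card / Fintype.card γ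

lemma fr_nonneg (s : Finset γ) : 0 ≤ fr s := by
  unfold fr; positivity

lemma fr_le_one (s : Finset γ) : fr s ≤ 1 := by
  unfold fr
  rcases Nat.eq_zero_or_pos (Fintype.card γ) with h | h
  · simp [h]
  · rw [div_le_one (by exact_mod_cast h)]
    exact_mod_cast (card_le_univ s).trans_eq (card_univ)

lemma fr_mono {s t : Finset γ} (h : s ⊆ t) : fr s ≤ fr t := by
  unfold fr
  rcases Nat.eq_zero_or_pos (Fintype.card γ) with h0 | h0
  · simp [h0]
  · have hpos : (0:ℝ) < Fintype.card γ := by exact_mod_cast h0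
    gcongr
    all_goals exact_mod_cast card_le_card h

lemma fr_union_le (s t : Finset γ) : fr (s ∪ t) ≤ fr s + fr t := by
  unfold fr
  rcases Nat.eq_zero_or_pos (Fintype.card γ) with h0 | h0
  · simp [h0]
  · rw [← add_div]
    have hpos : (0:ℝ) < Fintype.card γ := by exact_mod_cast h0
    gcongr
    all_goals exact_mod_cast card_union_le s t

lemma card_filter_comp (π : Equiv.Perm γ) (P : γ → Prop) [DecidablePred P] :
    (univ.filter fun x => P (π x)).card = (univ.filter P).card := by
  apply Finset.card_bij (fun x _ => π x)
  · intro a ha; simp only [mem_filter, mem_univ, true_and] at ha ⊢; exact ha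
  · intro a _ b _ h; exact π.injective h
  · intro b hb
    refine ⟨π.symm b, ?_, by simp⟩
    simp only [mem_filter, mem_univ, true_and] at hb ⊢
    simpa using hb

lemma fr_filter_comp (π : Equiv.Perm γ) (P : γ → Prop) [DecidablePred P] :
    fr (univ.filter fun x => P (π x)) = fr (univ.filter P) := by
  unfold fr; rw [card_filter_comp]

lemma fr_filter_not_le (P : γ → Prop) [DecidablePred P] :
    fr (univ.filter fun x => ¬ P x) ≤ 1 - fr (univ.filter P) := by
  unfold fr
  rcases Nat.eq_zero_or_pos (Fintype.card γ) with h0 | h0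
  · simp [h0]
  · have hcard : (univ.filter P).card + (univ.filter fun x => ¬ P x).card = Fintype.card γ := by
      rw [Finset.card_filter_add_card_filter_not]; exact card_univ
    have hpos : (0:ℝ) < Fintype.card γ := by exact_mod_cast h0
    rw [le_sub_iff_add_le, ← add_div, div_le_one hpos]
    exact_mod_cast (by omega : (univ.filter fun x => ¬ P x).card + (univ.filter P).card ≤ Fintype.card γ)

lemma dHp_eq_fr (a : Equiv.Perm γ) : dHp a 1 = fr (univ.filter fun x => a x ≠ x) := by
  unfold dHp fr
  congr 2

lemma dHp_nonneg (a b : Equiv.Perm γ) : 0 ≤ dHp a b := by unfold dHp; positivity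

lemma dHp_le_one (a b : Equiv.Perm γ) : dHp a b ≤ 1 := by
  have := fr_le_one (univ.filter fun x : γ => a x ≠ b x)
  unfold fr at this; exact this

lemma dHp_mul_le (a b : Equiv.Perm γ) : dHp (a * b) 1 ≤ dHp a 1 + dHp b 1 := by
  rw [dHp_eq_fr, dHp_eq_fr, dHp_eq_fr]
  have hsub : (univ.filter fun x => (a * b) x ≠ x) ⊆
      (univ.filter fun x => (fun y => a y ≠ y) (b x)) ∪ (univ.filter fun x => b x ≠ x) := by
    intro x hx
    simp only [mem_filter, mem_univ, true_and, mem_union] at hx ⊢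
    simp only [Equiv.Perm.mul_apply] at hx ⊢
    by_contra h
    push_neg at h
    exact hx (h.1.trans h.2)
  calc fr (univ.filter fun x => (a * b) x ≠ x) ≤ _ := fr_mono hsub
    _ ≤ fr (univ.filter fun x => (fun y => a y ≠ y) (b x)) + fr (univ.filter fun x => b x ≠ x) :=
        fr_union_le _ _
    _ = _ := by rw [fr_filter_comp b (fun y => a y ≠ y)]

lemma dHp_inv (a : Equiv.Perm γ) : dHp a⁻¹ 1 = dHp a 1 := by
  rw [dHp_eq_fr, dHp_eq_fr]
  congr 1
  apply filter_congr
  intro x _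
  rw [ne_eq, Equiv.Perm.inv_eq_iff_eq]
  exact not_congr eq_comm

lemma dHp_conj (u a : Equiv.Perm γ) : dHp (u * a * u⁻¹) 1 = dHp a 1 := by
  rw [dHp_eq_fr, dHp_eq_fr]
  rw [← fr_filter_comp u (fun x => (u * a * u⁻¹) x ≠ x)]
  congr 1
  apply filter_congr
  intro x _
  simp only [Equiv.Perm.mul_apply, Equiv.Perm.inv_def, Equiv.symm_apply_apply]
  constructor
  · intro h h'; exact h (by rw [h'])
  · intro h h'; exact h (u.injective h')


lemma exists_perm_extend (f : γ → γ) (D : Finset γ)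
    (hinj : ∀ x ∈ D, ∀ y ∈ D, f x = f y → x = y) :
    ∃ F : Equiv.Perm γ, ∀ x ∈ D, F x = f x := by
  classical
  set t := D.image f with ht
  have hcard : D.card = t.card := (Finset.card_image_iff.mpr
    (fun x hx y hy => hinj x (by simpa using hx) y (by simpa using hy))).symm
  have hcc : Dᶜ.card = tᶜ.card := by
    rw [Finset.card_compl, Finset.card_compl, hcard]
  set e := Finset.equivOfCardEq hcc with he
  set g : γ → γ := fun x => if h : x ∈ D then f x else (e ⟨x, by simp [h]⟩ : γ) with hg
  have hginj : Function.Injective g := by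
    intro a b hab
    by_cases ha : a ∈ D <;> by_cases hb : b ∈ D
    · exact hinj a ha b hb (by simpa [hg, ha, hb] using hab)
    · exfalso
      rw [hg] at hab
      simp only [ha, hb, dif_pos, dif_neg, not_false_iff] at hab
      have h1 : f a ∈ t := Finset.mem_image_of_mem f ha
      have h2 := (e ⟨b, by simp [hb]⟩).2
      rw [← hab] at h2
      simp only [Finset.mem_compl] at h2
      exact h2 h1
    · exfalso
      rw [hg] at hab
      simp only [ha, hb, dif_pos, dif_neg, not_false_iff] at hab
      have h1 : f b ∈ t := Finset.mem_image_of_mem f hb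
      have h2 := (e ⟨a, by simp [ha]⟩).2
      rw [hab] at h2
      simp only [Finset.mem_compl] at h2
      exact h2 h1
    · rw [hg] at hab
      simp only [ha, hb, dif_neg, not_false_iff] at hab
      have := e.injective (Subtype.ext hab)
      simpa using congrArg Subtype.val this
  refine ⟨Equiv.ofBijective g (Finite.injective_iff_bijective.mp hginj), ?_⟩
  intro x hx
  simp [Equiv.ofBijective_apply, hg, hx]

lemma tendsto_dHp_normalClosure {S : Type} [DecidableEq S] (R : Finset (FreeGroup S))
    {Ω : ℕ → Type} [∀ n, Fintype (Ω n)] [∀ n, DecidableEq (Ω n)]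
    (φ : ∀ n, S → Equiv.Perm (Ω n))
    (hR : ∀ r ∈ R, Tendsto (fun n => dHp (FreeGroup.lift (φ n) r) 1) atTop (nhds 0)) :
    ∀ w ∈ Subgroup.normalClosure (R : Set (FreeGroup S)),
      Tendsto (fun n => dHp (FreeGroup.lift (φ n) w) 1) atTop (nhds 0) := by
  intro w hw
  refine Subgroup.closure_induction ?_ ?_ ?_ ?_ hw
  · intro x hx
    rw [Group.mem_conjugatesOfSet_iff] at hx
    obtain ⟨r, hr, hconj⟩ := hx
    obtain ⟨c, hc⟩ := isConj_iff.mp hconj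
    subst hc
    have : ∀ n, dHp (FreeGroup.lift (φ n) (c * r * c⁻¹)) 1 = dHp (FreeGroup.lift (φ n) r) 1 := by
      intro n
      rw [map_mul, map_mul, map_inv]
      exact dHp_conj _ _
    simp only [this]
    exact hR r hr
  · have : ∀ n, dHp (FreeGroup.lift (φ n) 1) 1 = 0 := by
      intro n
      rw [map_one]
      rw [dHp_eq_fr]
      simp [fr]
    simp only [this]
    exact tendsto_const_nhds
  · intro x y _ _ hx hy
    apply squeeze_zero (fun n => dHp_nonneg _ _) (g := fun n =>
      dHp (FreeGroup.lift (φ n) x) 1 + dHp (FreeGroup.lift (φ n) y) 1)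
    · intro n
      rw [map_mul]
      exact dHp_mul_le _ _
    · simpa using hx.add hy
  · intro x _ hx
    have : ∀ n, dHp (FreeGroup.lift (φ n) x⁻¹) 1 = dHp (FreeGroup.lift (φ n) x) 1 := by
      intro n; rw [map_inv]; exact dHp_inv _
    simp only [this]
    exact hx



section Core

variable {S : Type} [DecidableEq S] {Ω : Type} [Fintype Ω] [DecidableEq Ω] [LinearOrder Ω]
variable (φ : S → Equiv.Perm Ω) (τ : S)

/-- the "good" set for the near-involution `φ τ`. -/
def isG (x : Ω) : Prop := φ τ (φ τ x) = x ∧ φ τ x ≠ x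

instance : DecidablePred (isG φ τ) := fun x => by unfold isG; infer_instance

lemma isG_apply {x : Ω} (h : isG φ τ x) : isG φ τ (φ τ x) :=
  ⟨congrArg (φ τ) h.1, by rw [h.1]; exact Ne.symm h.2⟩

/-- honest involution agreeing with `φ τ` on the good set -/
def fh (x : Ω) : Ω := if isG φ τ x then φ τ x else x

lemma fh_eq {x : Ω} (h : isG φ τ x) : fh φ τ x = φ τ x := if_pos h

lemma fh_ne {x : Ω} (h : isG φ τ x) : fh φ τ x ≠ x := by rw [fh_eq φ τ h]; exact h.2

lemma fh_invol : Function.Involutive (fh φ τ) := by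
  intro x
  by_cases h : isG φ τ x
  · rw [fh_eq φ τ h, fh_eq φ τ (isG_apply φ τ h), h.1]
  · have hx : fh φ τ x = x := if_neg h
    simp only [hx]

/-- `fh` as a permutation -/
def fhP : Equiv.Perm Ω := Function.Involutive.toPerm _ (fh_invol φ τ)

lemma fhP_apply (x : Ω) : fhP φ τ x = fh φ τ x := rfl

/-- polarization: a choice of sign on each 2-cycle of `fh` -/
def sg (x : Ω) : Bool := decide (fh φ τ x < x)

lemma sg_fh {x : Ω} (h : fh φ τ x ≠ x) : sg φ τ (fh φ τ x) = ! sg φ τ x := by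
  unfold sg
  rw [fh_invol φ τ x]
  rcases h.lt_or_gt with h' | h'
  · simp [h', h'.not_gt]
  · simp [h', h'.not_gt]

/-- `b`-th power of `fh` -/
def tp (b : Bool) (x : Ω) : Ω := if b then fh φ τ x else x

lemma tp_fh (b : Bool) (x : Ω) : tp φ τ b (fh φ τ x) = tp φ τ (!b) x := by
  cases b <;> simp [tp, fh_invol φ τ x]

lemma tp_inj (b : Bool) : Function.Injective (tp φ τ b) := by
  cases b
  · intro x y h; exact h
  · intro x y h; exact (fh_invol φ τ).injective h

/-- the sign cocycle of the generators -/
def ebl (s : S) (x : Ω) : Bool := if s = τ then true else xor (sg φ τ x) (sg φ τ (φ s x))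

/-- sign-corrected (not yet bijective) version of `φ s` -/
def Phi0 (s : S) (x : Ω) : Ω := tp φ τ (ebl φ τ s x) (φ s x)

/-- the set where everything is fine -/
def Dset (s : S) : Finset Ω :=
  univ.filter fun x => isG φ τ x ∧ isG φ τ (φ s x) ∧ φ s (φ τ x) = φ τ (φ s x)

lemma mem_Dset {s : S} {x : Ω} :
    x ∈ Dset φ τ s ↔ isG φ τ x ∧ isG φ τ (φ s x) ∧ φ s (φ τ x) = φ τ (φ s x) := by
  simp [Dset]

lemma Phi0_injOn (s : S) (hs : s ≠ τ) :
    ∀ x ∈ Dset φ τ s, ∀ y ∈ Dset φ τ s, Phi0 φ τ s x = Phi0 φ τ s y → x = y := by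
  have key : ∀ x ∈ Dset φ τ s, ∀ y ∈ Dset φ τ s,
      ebl φ τ s x = false → ebl φ τ s y = true → Phi0 φ τ s x = Phi0 φ τ s y → x = y := by
    intro x hx y hy hex hey h
    exfalso
    rw [mem_Dset] at hx hy
    obtain ⟨Gy, Gfy, cmy⟩ := hy
    unfold Phi0 at h
    rw [hex, hey] at h
    simp only [tp, if_pos, if_neg, Bool.false_eq_true, if_false, if_true] at h
    -- h : φ s x = fh φ τ (φ s y)
    have h1 : φ s x = φ s (φ τ y) := by
      rw [h, fh_eq φ τ Gfy, ← cmy]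
    have hxy : x = φ τ y := (φ s).injective h1
    have e1 : sg φ τ x = ! sg φ τ y := by
      rw [hxy, ← fh_eq φ τ Gy]
      exact sg_fh φ τ (fh_ne φ τ Gy)
    have e2 : sg φ τ (φ s x) = ! sg φ τ (φ s y) := by
      rw [h]
      exact sg_fh φ τ (fh_ne φ τ Gfy)
    unfold ebl at hex hey
    rw [if_neg hs] at hex hey
    rw [e1, e2] at hex
    cases hb : sg φ τ y <;> cases hc : sg φ τ (φ s y) <;>
      rw [hb, hc] at hex hey <;> simp_all
  intro x hx y hy h
  cases hex : ebl φ τ s x <;> cases hey : ebl φ τ s y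
  · unfold Phi0 at h; rw [hex, hey] at h
    exact (φ s).injective (tp_inj φ τ false h)
  · exact key x hx y hy hex hey h
  · exact (key y hy x hx hey hex h.symm).symm
  · unfold Phi0 at h; rw [hex, hey] at h
    exact (φ s).injective (tp_inj φ τ true h)


noncomputable def Phi (s : S) : Equiv.Perm Ω :=
  if hs : s = τ then 1
  else Classical.choose (exists_perm_extend (Phi0 φ τ s) (Dset φ τ s) (Phi0_injOn φ τ s hs))

lemma Phi_eq {s : S} (hs : s ≠ τ) {x : Ω} (hx : x ∈ Dset φ τ s) :
    Phi φ τ s x = Phi0 φ τ s x := by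
  rw [Phi, dif_neg hs]
  exact Classical.choose_spec
    (exists_perm_extend (Phi0 φ τ s) (Dset φ τ s) (Phi0_injOn φ τ s hs)) x hx

lemma Phi_tau : Phi φ τ τ = 1 := by rw [Phi, dif_pos rfl]

lemma bxor_cancel (a c : Bool) : xor a (xor a c) = c := by revert a c; decide

def skw (e : Ω → Bool) (F : Equiv.Perm Ω) : Equiv.Perm (Bool × Ω) where
  toFun p := (xor (e p.2) p.1, F p.2)
  invFun p := (xor (e (F.symm p.2)) p.1, F.symm p.2)
  left_inv := by
    rintro ⟨c, x⟩
    simp [bxor_cancel]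
  right_inv := by
    rintro ⟨c, x⟩
    simp [bxor_cancel]

lemma skw_apply (e : Ω → Bool) (F : Equiv.Perm Ω) (p : Bool × Ω) :
    skw e F p = (xor (e p.2) p.1, F p.2) := rfl

noncomputable def psi (s : S) : Equiv.Perm (Bool × Ω) := skw (ebl φ τ s) (Phi φ τ s)

lemma psi_apply (s : S) (p : Bool × Ω) :
    psi φ τ s p = (xor (ebl φ τ s p.2) p.1, Phi φ τ s p.2) := rfl

lemma negId_apply (p : Bool × Ω) : negId Ω p = (!p.1, p.2) := rfl

lemma psi_tau : psi φ τ τ = negId Ω := by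
  apply Equiv.ext
  rintro ⟨c, x⟩
  rw [psi_apply, negId_apply]
  simp [ebl, Phi_tau]

lemma psi_commute (s : S) : Commute (psi φ τ s) (negId Ω) := by
  apply Equiv.ext
  rintro ⟨c, x⟩
  simp only [Equiv.Perm.mul_apply, psi_apply, negId_apply]
  cases hc : c <;> cases he : ebl φ τ s x <;> simp [hc, he]

def ub (w : FreeGroup S) (x : Ω) : Bool := xor (sg φ τ x) (sg φ τ (FreeGroup.lift φ w x))

def rho (w : FreeGroup S) (p : Bool × Ω) : Bool × Ω :=
  (xor (ub φ τ w p.2) p.1, tp φ τ (ub φ τ w p.2) (FreeGroup.lift φ w p.2))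

def good (s : S) (x : Ω) : Prop :=
  if s = τ then isG φ τ x else (x ∈ Dset φ τ s ∧ fh φ τ x ∈ Dset φ τ s)

instance (s : S) : DecidablePred (good φ τ s) := fun x => by unfold good; infer_instance

lemma lift_of_mul (s : S) (v : FreeGroup S) (x : Ω) :
    FreeGroup.lift φ (FreeGroup.of s * v) x = φ s (FreeGroup.lift φ v x) := by
  rw [map_mul, FreeGroup.lift_apply_of, Equiv.Perm.mul_apply]

lemma tp_true (x : Ω) : tp φ τ true x = fh φ τ x := rfl

lemma tp_false (x : Ω) : tp φ τ false x = x := rfl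

lemma letter (s : S) (v : FreeGroup S) (x : Ω) (c : Bool)
    (h : good φ τ s (FreeGroup.lift φ v x)) :
    psi φ τ s (rho φ τ v (c, x)) = rho φ τ (FreeGroup.of s * v) (c, x) := by
  have hy : FreeGroup.lift φ (FreeGroup.of s * v) x = φ s (FreeGroup.lift φ v x) :=
    lift_of_mul φ s v x
  set x' := FreeGroup.lift φ v x with hx'
  by_cases hs : s = τ
  · subst hs
    rw [good, if_pos rfl] at h
    have h1 : fh φ s x' = φ s x' := fh_eq φ s h
    have h2 : sg φ s (φ s x') = ! sg φ s x' := by rw [← h1]; exact sg_fh φ s (fh_ne φ s h)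
    have key2 : tp φ s (xor (sg φ s x) (!sg φ s x')) (φ s x') =
        tp φ s (xor (sg φ s x) (sg φ s x')) x' := by
      rw [← h1, tp_fh]
      congr 1
      cases sg φ s x <;> cases sg φ s x' <;> rfl
    rw [rho, rho, psi_apply]
    unfold ub
    simp only [hy, ← hx']
    rw [Phi_tau, Equiv.Perm.one_apply, h2, key2]
    simp only [ebl, if_pos rfl, Prod.mk.injEq]
    refine ⟨?_, trivial⟩
    cases sg φ s x <;> cases sg φ s x' <;> cases c <;> rfl
  · rw [good, if_neg hs] at h
    obtain ⟨hD, hDf⟩ := h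
    obtain ⟨Gx', Gy, cm⟩ := (mem_Dset φ τ).mp hD
    have f1 : fh φ τ x' = φ τ x' := fh_eq φ τ Gx'
    have f2 : sg φ τ (fh φ τ x') = ! sg φ τ x' := sg_fh φ τ (fh_ne φ τ Gx')
    have f3 : fh φ τ (φ s x') = φ τ (φ s x') := fh_eq φ τ Gy
    have f4 : sg φ τ (fh φ τ (φ s x')) = ! sg φ τ (φ s x') := sg_fh φ τ (fh_ne φ τ Gy)
    have f5 : φ s (fh φ τ x') = fh φ τ (φ s x') := by rw [f1, f3, cm]
    have p1 : Phi φ τ s x' = Phi0 φ τ s x' := Phi_eq φ τ hs hD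
    have p2 : Phi φ τ s (fh φ τ x') = Phi0 φ τ s (fh φ τ x') := Phi_eq φ τ hs hDf
    rw [rho, rho, psi_apply]
    unfold ub
    simp only [hy, ← hx']
    by_cases h0 : sg φ τ x = sg φ τ x'
    · have hu : xor (sg φ τ x) (sg φ τ x') = false := by rw [h0]; exact Bool.xor_self _
      rw [hu, tp_false]
      have e1 : ebl φ τ s x' = xor (sg φ τ x') (sg φ τ (φ s x')) := by
        unfold ebl; rw [if_neg hs]
      have e2 : Phi φ τ s x' = tp φ τ (xor (sg φ τ x') (sg φ τ (φ s x'))) (φ s x') := by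
        rw [p1]; unfold Phi0; rw [e1]
      rw [e1, e2, h0]
      simp only [Prod.mk.injEq]
      refine ⟨?_, trivial⟩
      cases sg φ τ x' <;> cases sg φ τ (φ s x') <;> cases c <;> rfl
    · have h0' : sg φ τ x = !(sg φ τ x') := by
        cases hsx : sg φ τ x <;> cases hsx' : sg φ τ x' <;> simp_all
      have hu : xor (sg φ τ x) (sg φ τ x') = true := by
        rw [h0']; cases sg φ τ x' <;> rfl
      rw [hu, tp_true]
      have e1 : ebl φ τ s (fh φ τ x') = xor (!sg φ τ x') (!sg φ τ (φ s x')) := by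
        unfold ebl; rw [if_neg hs, f5, f2, f4]
      have e2 : Phi φ τ s (fh φ τ x') =
          tp φ τ (!(xor (!sg φ τ x') (!sg φ τ (φ s x')))) (φ s x') := by
        rw [p2]; unfold Phi0; rw [e1, f5, tp_fh]
      rw [e1, e2, h0']
      simp only [Prod.mk.injEq]
      constructor
      · cases sg φ τ x' <;> cases sg φ τ (φ s x') <;> cases c <;> rfl
      · congr 1
        cases sg φ τ x' <;> cases sg φ τ (φ s x') <;> rfl


end Core

section Seq0

variable {γ : Type*} [Fintype γ] [DecidableEq γ]

lemma fr_snd (Q : γ → Prop) [DecidablePred Q] :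
    fr ((univ : Finset (Bool × γ)).filter fun p => Q p.2) = fr (univ.filter Q) := by
  unfold fr
  have hset : ((univ : Finset (Bool × γ)).filter fun p => Q p.2)
      = (univ : Finset Bool) ×ˢ (univ.filter Q) := by
    ext ⟨b, x⟩
    simp [Finset.mem_product]
  rw [hset, Finset.card_product, Fintype.card_prod, Fintype.card_bool, card_univ,
    Fintype.card_bool]
  push_cast
  rw [mul_div_mul_left _ _ (two_ne_zero)]

end Seq0

section CoreB

variable {S : Type} [DecidableEq S] {Ω : Type} [Fintype Ω] [DecidableEq Ω] [LinearOrder Ω]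
variable (φ : S → Equiv.Perm Ω) (τ : S)

lemma rho_one (p : Bool × Ω) : rho φ τ 1 p = p := by
  obtain ⟨c, x⟩ := p
  unfold rho ub
  rw [map_one]
  simp [tp]

/-- points where the inductive comparison between `psi` words and `rho` fails -/
noncomputable def errSet (w v : FreeGroup S) : Finset (Bool × Ω) :=
  univ.filter fun p =>
    FreeGroup.lift (fun t => psi φ τ t) w (rho φ τ v p) ≠ rho φ τ (w * v) p

lemma errSet_one (v : FreeGroup S) : errSet φ τ 1 v = ∅ := by
  unfold errSet
  rw [Finset.filter_eq_empty_iff]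
  intro p _
  rw [map_one, one_mul]
  simp

lemma errSet_letter (s : S) (v : FreeGroup S) :
    errSet φ τ (FreeGroup.of s) v ⊆
      univ.filter fun p : Bool × Ω => ¬ good φ τ s (FreeGroup.lift φ v p.2) := by
  intro p hp
  simp only [errSet, mem_filter, mem_univ, true_and] at hp ⊢
  intro hgood
  apply hp
  obtain ⟨c, x⟩ := p
  rw [FreeGroup.lift_apply_of]
  exact letter φ τ s v x c hgood

lemma errSet_mul (w₁ w₂ v : FreeGroup S) :
    errSet φ τ (w₁ * w₂) v ⊆ errSet φ τ w₂ v ∪ errSet φ τ w₁ (w₂ * v) := by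
  intro p hp
  simp only [errSet, mem_filter, mem_univ, true_and, mem_union] at hp ⊢
  by_contra hc
  push_neg at hc
  obtain ⟨h2, h1⟩ := hc
  apply hp
  rw [map_mul, Equiv.Perm.mul_apply, h2, h1, mul_assoc]

lemma errSet_inv (w v : FreeGroup S) : errSet φ τ w⁻¹ v = errSet φ τ w (w⁻¹ * v) := by
  unfold errSet
  apply filter_congr
  intro p _
  rw [map_inv, mul_inv_cancel_left, ne_eq, Equiv.Perm.inv_eq_iff_eq, ← ne_eq, ne_comm]

lemma rho_fix {w : FreeGroup S} {p : Bool × Ω} (h : FreeGroup.lift φ w p.2 = p.2) :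
    rho φ τ w p = p := by
  obtain ⟨c, x⟩ := p
  unfold rho ub
  simp only at h
  rw [h]
  simp [tp]

lemma rho_fix' {w : FreeGroup S} {p : Bool × Ω} (h : rho φ τ w p = p) :
    FreeGroup.lift φ w p.2 = p.2 := by
  obtain ⟨c, x⟩ := p
  unfold rho ub at h
  simp only [Prod.mk.injEq] at h
  obtain ⟨h1, h2⟩ := h
  have hu : xor (sg φ τ x) (sg φ τ (FreeGroup.lift φ w x)) = false := by
    by_contra hne
    rw [Bool.not_eq_false] at hne
    rw [hne] at h1
    cases c <;> simp_all
  rw [hu, tp_false] at h2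
  exact h2

lemma dHp_psi_le (w : FreeGroup S) :
    dHp (FreeGroup.lift (fun t => psi φ τ t) w) 1 ≤
      fr (errSet φ τ w 1) + dHp (FreeGroup.lift φ w) 1 := by
  rw [dHp_eq_fr, dHp_eq_fr, ← fr_snd (fun x : Ω => FreeGroup.lift φ w x ≠ x)]
  have hsub : (univ.filter fun p : Bool × Ω => FreeGroup.lift (fun t => psi φ τ t) w p ≠ p) ⊆
      errSet φ τ w 1 ∪ (univ.filter fun p : Bool × Ω => FreeGroup.lift φ w p.2 ≠ p.2) := by
    intro p hp
    simp only [mem_filter, mem_univ, true_and, mem_union, errSet] at hp ⊢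
    by_contra hc
    push_neg at hc
    obtain ⟨h1, h2⟩ := hc
    rw [rho_one, mul_one] at h1
    exact hp (by rw [h1]; exact rho_fix φ τ h2)
  exact (fr_mono hsub).trans (fr_union_le _ _)

lemma dHp_phi_le (w : FreeGroup S) :
    dHp (FreeGroup.lift φ w) 1 ≤
      fr (errSet φ τ w 1) + dHp (FreeGroup.lift (fun t => psi φ τ t) w) 1 := by
  rw [dHp_eq_fr, dHp_eq_fr, ← fr_snd (fun x : Ω => FreeGroup.lift φ w x ≠ x)]
  have hsub : (univ.filter fun p : Bool × Ω => FreeGroup.lift φ w p.2 ≠ p.2) ⊆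
      errSet φ τ w 1 ∪
        (univ.filter fun p : Bool × Ω => FreeGroup.lift (fun t => psi φ τ t) w p ≠ p) := by
    intro p hp
    simp only [mem_filter, mem_univ, true_and, mem_union, errSet] at hp ⊢
    by_contra hc
    push_neg at hc
    obtain ⟨h1, h2⟩ := hc
    rw [rho_one, mul_one] at h1
    rw [h2] at h1
    exact hp (rho_fix' φ τ h1.symm)
  exact (fr_mono hsub).trans (fr_union_le _ _)

/-- fraction of points not in the good set of the near-involution -/
lemma fr_notG_le :
    fr (univ.filter fun x : Ω => ¬ isG φ τ x) ≤
      dHp (φ τ * φ τ) 1 + (1 - dHp (φ τ) 1) := by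
  have hsub : (univ.filter fun x : Ω => ¬ isG φ τ x) ⊆
      (univ.filter fun x : Ω => (φ τ * φ τ) x ≠ x) ∪
        (univ.filter fun x : Ω => ¬ (φ τ x ≠ x)) := by
    intro x hx
    simp only [mem_filter, mem_univ, true_and, mem_union] at hx ⊢
    simp only [Equiv.Perm.mul_apply, isG] at hx ⊢
    tauto
  refine (fr_mono hsub).trans ((fr_union_le _ _).trans ?_)
  gcongr
  · rw [dHp_eq_fr]
  · exact (fr_filter_not_le _).trans (by rw [dHp_eq_fr])

lemma fr_comm_eq (s : S) :
    fr (univ.filter fun x : Ω => φ s (φ τ x) ≠ φ τ (φ s x)) =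
      dHp (FreeGroup.lift φ ⁅FreeGroup.of s, FreeGroup.of τ⁆) 1 := by
  rw [dHp_eq_fr,
    ← fr_filter_comp (φ τ * φ s) (fun z => FreeGroup.lift φ ⁅FreeGroup.of s, FreeGroup.of τ⁆ z ≠ z)]
  have hset : (univ.filter fun x : Ω => φ s (φ τ x) ≠ φ τ (φ s x)) =
      (univ.filter fun x : Ω =>
        FreeGroup.lift φ ⁅FreeGroup.of s, FreeGroup.of τ⁆ ((φ τ * φ s) x) ≠ (φ τ * φ s) x) := by
    apply filter_congr
    intro x _
    simp [commutatorElement_def, map_mul, map_inv, FreeGroup.lift_apply_of,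
      Equiv.Perm.mul_apply, Equiv.Perm.inv_def, Equiv.symm_apply_apply]
  rw [hset]

lemma fr_notD_le (s : S) :
    fr (univ.filter fun x : Ω => x ∉ Dset φ τ s) ≤
      fr (univ.filter fun x : Ω => ¬ isG φ τ x) + fr (univ.filter fun x : Ω => ¬ isG φ τ x) +
        fr (univ.filter fun x : Ω => φ s (φ τ x) ≠ φ τ (φ s x)) := by
  have hsub : (univ.filter fun x : Ω => x ∉ Dset φ τ s) ⊆
      ((univ.filter fun x : Ω => ¬ isG φ τ x) ∪
        (univ.filter fun x : Ω => (fun z => ¬ isG φ τ z) (φ s x))) ∪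
        (univ.filter fun x : Ω => φ s (φ τ x) ≠ φ τ (φ s x)) := by
    intro x hx
    simp only [mem_filter, mem_univ, true_and, mem_union, mem_Dset] at hx ⊢
    tauto
  refine (fr_mono hsub).trans ((fr_union_le _ _).trans ?_)
  gcongr
  refine (fr_union_le _ _).trans ?_
  gcongr
  rw [fr_filter_comp (φ s) (fun z => ¬ isG φ τ z)]

lemma fr_notGood_le (s : S) :
    fr (univ.filter fun x : Ω => ¬ good φ τ s x) ≤
      fr (univ.filter fun x : Ω => ¬ isG φ τ x) +
      (fr (univ.filter fun x : Ω => x ∉ Dset φ τ s) +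
       fr (univ.filter fun x : Ω => x ∉ Dset φ τ s)) := by
  by_cases hs : s = τ
  · subst hs
    have : (univ.filter fun x : Ω => ¬ good φ s s x) = univ.filter fun x : Ω => ¬ isG φ s x := by
      apply filter_congr
      intro x _
      rw [good, if_pos rfl]
    rw [this]
    have h1 := fr_nonneg (univ.filter fun x : Ω => x ∉ Dset φ s s)
    linarith
  · have hsub : (univ.filter fun x : Ω => ¬ good φ τ s x) ⊆
        (univ.filter fun x : Ω => x ∉ Dset φ τ s) ∪
          (univ.filter fun x : Ω => (fun z => z ∉ Dset φ τ s) (fhP φ τ x)) := by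
      intro x hx
      simp only [mem_filter, mem_univ, true_and, mem_union] at hx ⊢
      simp only [good, if_neg hs, fhP_apply] at hx ⊢
      tauto
    refine (fr_mono hsub).trans ?_
    have h2 := (fr_union_le (univ.filter fun x : Ω => x ∉ Dset φ τ s)
      (univ.filter fun x : Ω => (fun z => z ∉ Dset φ τ s) (fhP φ τ x)))
    rw [fr_filter_comp (fhP φ τ) (fun z => z ∉ Dset φ τ s)] at h2
    have h1 := fr_nonneg (univ.filter fun x : Ω => ¬ isG φ τ x)
    linarith

end CoreB

end Stmt12Aux

/-- If `Γ = ⟨S | R⟩` is a finitely presented sofic group with a generator `τ ∈ S`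
that is a central nontrivial involution in `Γ`, then `Γ` has a sofic approximation
on sets of the form `Ω± = {±} × Ω` in which `τ` is always sent to the sign flip and
every permutation in the image commutes with the sign flip. -/
theorem stmt12 {S : Type} [DecidableEq S] (R : Finset (FreeGroup S)) (τ : S)
    (hτc : ∀ g : PresentedGroup (R : Set (FreeGroup S)),
      Commute (PresentedGroup.of τ) g)
    (hτ2 : (PresentedGroup.of τ : PresentedGroup (R : Set (FreeGroup S))) ^ 2 = 1)
    (hτne : (PresentedGroup.of τ : PresentedGroup (R : Set (FreeGroup S))) ≠ 1)
    (hsofic : ∃ (m : ℕ → ℕ) (φ : ∀ n, S → Equiv.Perm (Fin (m n))),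
      IsSoficApprox R φ) :
    ∃ (m : ℕ → ℕ) (ψ : ∀ n, S → Equiv.Perm (Bool × Fin (m n))),
      IsSoficApprox R ψ ∧ (∀ n, ψ n τ = negId (Fin (m n))) ∧
      ∀ n (s : S), Commute (ψ n s) (negId (Fin (m n))) := by
  classical
  open Stmt12Aux Finset Filter in
  obtain ⟨m, φ, hdef, hsep⟩ := hsofic
  -- membership facts in the normal closure
  set N := Subgroup.normalClosure (R : Set (FreeGroup S)) with hN
  have hτ2N : (FreeGroup.of τ) ^ 2 ∈ N := by
    have h1 : (PresentedGroup.mk (R : Set (FreeGroup S)) ((FreeGroup.of τ) ^ 2) :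
        PresentedGroup (R : Set (FreeGroup S))) = 1 := by
      rw [map_pow]; exact hτ2
    exact (QuotientGroup.eq_one_iff _).mp h1
  have hτneN : (FreeGroup.of τ) ∉ N := by
    intro hmem
    exact hτne ((QuotientGroup.eq_one_iff _).mpr hmem)
  have hcommN : ∀ s : S, ⁅FreeGroup.of s, FreeGroup.of τ⁆ ∈ N := by
    intro s
    have h1 : (PresentedGroup.mk (R : Set (FreeGroup S)) ⁅FreeGroup.of s, FreeGroup.of τ⁆ :
        PresentedGroup (R : Set (FreeGroup S))) = 1 := by
      rw [map_commutatorElement]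
      exact commutatorElement_eq_one_iff_commute.mpr (hτc (PresentedGroup.of s)).symm
    exact (QuotientGroup.eq_one_iff _).mp h1
  -- limits of the basic defect quantities
  have hNlim : ∀ w ∈ N, Tendsto (fun n => dHp (FreeGroup.lift (φ n) w) 1) atTop (nhds 0) :=
    tendsto_dHp_normalClosure R φ hdef
  have hgb : Tendsto (fun n => fr (univ.filter fun x : Fin (m n) => ¬ isG (φ n) τ x))
      atTop (nhds 0) := by
    apply squeeze_zero (fun n => fr_nonneg _)
      (g := fun n => dHp (FreeGroup.lift (φ n) ((FreeGroup.of τ) ^ 2)) 1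
        + (1 - dHp (FreeGroup.lift (φ n) (FreeGroup.of τ)) 1))
    · intro n
      have e1 : FreeGroup.lift (φ n) ((FreeGroup.of τ) ^ 2) = φ n τ * φ n τ := by
        rw [map_pow, FreeGroup.lift_apply_of, pow_two]
      have e2 : FreeGroup.lift (φ n) (FreeGroup.of τ) = φ n τ := FreeGroup.lift_apply_of
      rw [e1, e2]
      exact fr_notG_le (φ n) τ
    · have := (hNlim _ hτ2N).add
        ((tendsto_const_nhds (x := (1:ℝ))).sub (hsep _ hτneN))
      simpa using this
  have hcb : ∀ s : S, Tendsto
      (fun n => fr (univ.filter fun x : Fin (m n) => φ n s (φ n τ x) ≠ φ n τ (φ n s x)))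
      atTop (nhds 0) := by
    intro s
    have : ∀ n, fr (univ.filter fun x : Fin (m n) => φ n s (φ n τ x) ≠ φ n τ (φ n s x))
        = dHp (FreeGroup.lift (φ n) ⁅FreeGroup.of s, FreeGroup.of τ⁆) 1 :=
      fun n => fr_comm_eq (φ n) τ s
    simp only [this]
    exact hNlim _ (hcommN s)
  have hbad : ∀ s : S, Tendsto
      (fun n => fr (univ.filter fun x : Fin (m n) => ¬ good (φ n) τ s x)) atTop (nhds 0) := by
    intro s
    have hDb : ∀ n, fr (univ.filter fun x : Fin (m n) => x ∉ Dset (φ n) τ s) ≤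
        fr (univ.filter fun x : Fin (m n) => ¬ isG (φ n) τ x)
        + fr (univ.filter fun x : Fin (m n) => ¬ isG (φ n) τ x)
        + fr (univ.filter fun x : Fin (m n) => φ n s (φ n τ x) ≠ φ n τ (φ n s x)) :=
      fun n => fr_notD_le (φ n) τ s
    apply squeeze_zero (fun n => fr_nonneg _)
      (g := fun n => fr (univ.filter fun x : Fin (m n) => ¬ isG (φ n) τ x)
        + 2 * (fr (univ.filter fun x : Fin (m n) => ¬ isG (φ n) τ x)
          + fr (univ.filter fun x : Fin (m n) => ¬ isG (φ n) τ x)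
          + fr (univ.filter fun x : Fin (m n) => φ n s (φ n τ x) ≠ φ n τ (φ n s x))))
    · intro n
      have h1 := fr_notGood_le (φ n) τ s
      have h2 := hDb n
      nlinarith [fr_nonneg (univ.filter fun x : Fin (m n) => x ∉ Dset (φ n) τ s)]
    · have := hgb.add (((hgb.add hgb).add (hcb s)).const_mul 2)
      simpa using this
  -- the master comparison estimate
  have herr : ∀ w v : FreeGroup S,
      Tendsto (fun n => fr (errSet (φ n) τ w v)) atTop (nhds 0) := by
    intro w
    induction w using FreeGroup.induction_on with
    | C1 =>
      intro v
      have h0 : ∀ n, fr (errSet (φ n) τ 1 v) = 0 := by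
        intro n; rw [errSet_one]; simp [fr]
      simp only [h0]
      exact tendsto_const_nhds
    | of s =>
      intro v
      apply squeeze_zero (fun n => fr_nonneg _)
        (g := fun n => fr (univ.filter fun x : Fin (m n) => ¬ good (φ n) τ s x))
      · intro n
        have t1 := fr_mono (errSet_letter (φ n) τ s v)
        rw [fr_snd (fun x : Fin (m n) => ¬ good (φ n) τ s (FreeGroup.lift (φ n) v x))] at t1
        rw [fr_filter_comp (FreeGroup.lift (φ n) v) (fun z => ¬ good (φ n) τ s z)] at t1
        exact t1
      · exact hbad s
    | inv_of s ih =>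
      intro v
      exact Filter.Tendsto.congr
        (fun n => congrArg fr (errSet_inv (φ n) τ (pure s) v).symm)
        (ih (((pure s : FreeGroup S))⁻¹ * v))
    | mul x y ihx ihy =>
      intro v
      apply squeeze_zero (fun n => fr_nonneg _)
        (g := fun n => fr (errSet (φ n) τ y v) + fr (errSet (φ n) τ x (y * v)))
      · intro n
        exact (fr_mono (errSet_mul (φ n) τ x y v)).trans (fr_union_le _ _)
      · simpa using (ihy v).add (ihx (y * v))
  -- assemble
  refine ⟨m, fun n s => psi (φ n) τ s, ⟨?_, ?_⟩, fun n => psi_tau (φ n) τ,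
    fun n s => psi_commute (φ n) τ s⟩
  · intro r hr
    apply squeeze_zero (fun n => dHp_nonneg _ _)
      (g := fun n => fr (errSet (φ n) τ r 1) + dHp (FreeGroup.lift (φ n) r) 1)
    · intro n
      exact dHp_psi_le (φ n) τ r
    · simpa using (herr r 1).add (hdef r hr)
  · intro w hw
    show Tendsto (fun n => dHp (FreeGroup.lift (fun t => psi (φ n) τ t) w) 1) atTop (nhds 1)
    apply tendsto_of_tendsto_of_tendsto_of_le_of_le
      (g := fun n => dHp (FreeGroup.lift (φ n) w) 1 - fr (errSet (φ n) τ w 1))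
      (h := fun _ => (1:ℝ))
    · have := (hsep w hw).sub (herr w 1)
      simpa using this
    · exact tendsto_const_nhds
    · intro n
      dsimp only
      have := dHp_phi_le (φ n) τ w
      linarith
    · intro n
      dsimp only
      exact dHp_le_one _ _
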